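/- Let n, k, σ be natural numbers with σ ≤ n, let A be an n×n real diagonal matrix, and let b, c_1,…,c_k ∈ ℝ^n. Then there exists a constant C₀ depending only on k (and not on n or the data) and a family 𝒳 of at most C₀·n^{2k} subsets of {1,…,n}, each of cardinality σ, such that for every λ ∈ ℝ^k the problem opt(σ)_{|λ} := min{‖Ax − (b − Σ_{ℓ=1}^k c_ℓ λ_ℓ)‖² : x ∈ ℝ^n, |supp(x)| ≤ σ} has an optimal solution whose support is contained in some χ ∈ 𝒳. -/

import Mathlib

/-- The objective of `opt(σ)_{|λ}` for a diagonal matrix with diagonal `a`: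
`‖Ax − (b − ∑_ℓ c_ℓ λ_ℓ)‖²`. -/
noncomputable def objDiag {n k : ℕ} (a b : Fin n → ℝ) (c : Fin k → Fin n → ℝ)
    (x : Fin n → ℝ) (lam : Fin k → ℝ) : ℝ :=
  ∑ i, (a i * x i - (b i - ∑ ℓ, c ℓ i * lam ℓ)) ^ 2

open Finset

lemma sign_determines (u v : ℝ) (h : SignType.sign u = SignType.sign v) :
    (0 < u ↔ 0 < v) ∧ (u = 0 ↔ v = 0) :=
  ⟨by rw [← sign_eq_one_iff, h, sign_eq_one_iff],
   by rw [← sign_eq_zero_iff, h, sign_eq_zero_iff]⟩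

lemma affine_combo {k : ℕ} (A : ℝ) (B : Fin k → ℝ) (T : Finset (Fin k)) (x y : Fin k → ℝ)
    (t : ℝ) :
    A + ∑ i ∈ T, B i * ((1 - t) * x i + t * y i)
      = (1 - t) * (A + ∑ i ∈ T, B i * x i) + t * (A + ∑ i ∈ T, B i * y i) := by
  have h : ∑ i ∈ T, B i * ((1 - t) * x i + t * y i)
      = (1 - t) * ∑ i ∈ T, B i * x i + t * ∑ i ∈ T, B i * y i := by
    rw [Finset.mul_sum, Finset.mul_sum, ← Finset.sum_add_distrib]
    exact Finset.sum_congr rfl fun i _ => by ring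
  rw [h]; ring

lemma sign_combo (x y t : ℝ) (h0 : 0 < t) (h1 : t < 1)
    (h : SignType.sign x = SignType.sign y) :
    SignType.sign ((1 - t) * x + t * y) = SignType.sign x := by
  rcases lt_trichotomy x 0 with hx | hx | hx
  · have hy : y < 0 := by
      rw [← sign_eq_neg_one_iff] at hx ⊢; rwa [← h]
    have : (1 - t) * x + t * y < 0 := by nlinarith
    rw [sign_neg this, sign_neg hx]
  · have hy : y = 0 := by
      rw [← sign_eq_zero_iff] at hx ⊢; rwa [← h]
    simp [hx, hy]
  · have hy : 0 < y := by
      rw [← sign_eq_one_iff] at hx ⊢; rwa [← h]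
    have : 0 < (1 - t) * x + t * y := by nlinarith
    rw [sign_pos this, sign_pos hx]

/-- The set of realized sign patterns of `N` affine functions of variables indexed by `T`. -/
def patSet {k : ℕ} (N : ℕ) (T : Finset (Fin k)) (A : Fin N → ℝ) (B : Fin N → Fin k → ℝ) :
    Set (Fin N → SignType) :=
  {s | ∃ lam : Fin k → ℝ, ∀ m, s m = SignType.sign (A m + ∑ i ∈ T, B m i * lam i)}

lemma patSet_card {k : ℕ} :
    ∀ (N : ℕ) (T : Finset (Fin k)) (A : Fin N → ℝ) (B : Fin N → Fin k → ℝ),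
    (patSet N T A B).ncard ≤ (2 * N + 1) ^ T.card := by
  intro N
  induction N with
  | zero =>
    intro T A B
    have h : patSet 0 T A B ⊆ {fun m => m.elim0} := by
      intro s _
      have : s = fun m => m.elim0 := funext fun m => m.elim0
      simp [this]
    calc (patSet 0 T A B).ncard ≤ ({fun m => m.elim0} : Set (Fin 0 → SignType)).ncard :=
          Set.ncard_le_ncard h (Set.toFinite _)
      _ = 1 := Set.ncard_singleton _
      _ ≤ (2 * 0 + 1) ^ T.card := by simp
  | succ N ih =>
    intro T A B
    classical
    set L : Fin (N + 1) := Fin.last N with hL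
    set A' : Fin N → ℝ := fun m => A m.castSucc with hA'
    set B' : Fin N → Fin k → ℝ := fun m => B m.castSucc with hB'
    set P : Set (Fin N → SignType) := patSet N T A' B' with hP
    set Q : Set (Fin N → SignType) :=
      {p | ∃ lam : Fin k → ℝ, (∀ m, p m = SignType.sign (A' m + ∑ i ∈ T, B' m i * lam i)) ∧
        A L + ∑ i ∈ T, B L i * lam i = 0} with hQ
    have hPcard : P.ncard ≤ (2 * N + 1) ^ T.card := ih T A' B'
    set Sσ : SignType → Set (Fin (N + 1) → SignType) :=
      fun σ₀ => {s ∈ patSet (N + 1) T A B | s L = σ₀} with hSσ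
    have hinj : ∀ σ₀, Set.InjOn Fin.init (Sσ σ₀) := by
      intro σ₀ s hs s' hs' hE
      funext m
      refine Fin.lastCases ?_ (fun j => ?_) m
      · rw [hs.2, hs'.2]
      · exact congrFun hE j
    have hicard : ∀ σ₀, (Sσ σ₀).ncard = (Fin.init '' Sσ σ₀).ncard :=
      fun σ₀ => (Set.ncard_image_of_injOn (hinj σ₀)).symm
    have hIP : ∀ σ₀, Fin.init '' Sσ σ₀ ⊆ P := by
      rintro σ₀ p ⟨s, ⟨⟨lam, hlam⟩, _⟩, rfl⟩
      exact ⟨lam, fun m => hlam m.castSucc⟩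
    have hI0 : Fin.init '' Sσ 0 ⊆ Q := by
      rintro p ⟨s, ⟨⟨lam, hlam⟩, hsl⟩, rfl⟩
      refine ⟨lam, fun m => hlam m.castSucc, ?_⟩
      rw [← sign_eq_zero_iff, ← hlam L, hsl]
    have hIinter : Fin.init '' Sσ 1 ∩ Fin.init '' Sσ (-1) ⊆ Q := by
      rintro p ⟨⟨sp, ⟨⟨lamp, hlamp⟩, hspl⟩, hpe⟩, ⟨sm, ⟨⟨lamm, hlamm⟩, hsml⟩, hme⟩⟩
      have hvp : 0 < A L + ∑ i ∈ T, B L i * lamp i := by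
        rw [← sign_eq_one_iff, ← hlamp L, hspl]
      have hvm : A L + ∑ i ∈ T, B L i * lamm i < 0 := by
        rw [← sign_eq_neg_one_iff, ← hlamm L, hsml]
      set u : ℝ := A L + ∑ i ∈ T, B L i * lamm i with hu
      set v : ℝ := A L + ∑ i ∈ T, B L i * lamp i with hv
      set t : ℝ := (-u) / (v - u) with ht
      have hvu : 0 < v - u := by linarith
      have ht0 : 0 < t := div_pos (by linarith) hvu
      have ht1 : t < 1 := by rw [ht, div_lt_one hvu]; linarith
      set lam0 : Fin k → ℝ := fun i => (1 - t) * lamm i + t * lamp i with hlam0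
      have hkey : ∀ m : Fin (N + 1), A m + ∑ i ∈ T, B m i * lam0 i
          = (1 - t) * (A m + ∑ i ∈ T, B m i * lamm i)
            + t * (A m + ∑ i ∈ T, B m i * lamp i) := by
        intro m
        rw [hlam0]
        exact affine_combo (A m) (B m) T lamm lamp t
      refine ⟨lam0, fun m => ?_, ?_⟩
      · have hsame : SignType.sign (A m.castSucc + ∑ i ∈ T, B m.castSucc i * lamm i)
            = SignType.sign (A m.castSucc + ∑ i ∈ T, B m.castSucc i * lamp i) := by
          rw [← hlamm m.castSucc, ← hlamp m.castSucc]
          have h1 : sm m.castSucc = p m := congrFun hme m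
          have h2 : sp m.castSucc = p m := congrFun hpe m
          rw [h1, h2]
        simp only [hA', hB']
        rw [hkey m.castSucc,
          sign_combo _ _ t ht0 ht1 hsame, ← hlamm m.castSucc]
        exact (congrFun hme m).symm
      · rw [hkey L]
        have hne : v - u ≠ 0 := ne_of_gt hvu
        rw [← hu, ← hv, ht]
        field_simp
        ring
    by_cases hBconst : ∀ i ∈ T, B L i = 0
    · have hconst : ∀ lam : Fin k → ℝ,
          SignType.sign (A L + ∑ i ∈ T, B L i * lam i) = SignType.sign (A L) := by
        intro lam
        have : ∑ i ∈ T, B L i * lam i = 0 :=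
          Finset.sum_eq_zero fun i hi => by rw [hBconst i hi, zero_mul]
        rw [this, add_zero]
      have hinjS : Set.InjOn Fin.init (patSet (N + 1) T A B) := by
        intro s hs s' hs' hE
        funext m
        refine Fin.lastCases ?_ (fun j => ?_) m
        · obtain ⟨lam, hlam⟩ := hs
          obtain ⟨lam', hlam'⟩ := hs'
          rw [hlam L, hlam' L, hconst lam, hconst lam']
        · exact congrFun hE j
      have hsub : Fin.init '' patSet (N + 1) T A B ⊆ P := by
        rintro p ⟨s, ⟨lam, hlam⟩, rfl⟩
        exact ⟨lam, fun m => hlam m.castSucc⟩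
      calc (patSet (N + 1) T A B).ncard = (Fin.init '' patSet (N + 1) T A B).ncard :=
            (Set.ncard_image_of_injOn hinjS).symm
        _ ≤ P.ncard := Set.ncard_le_ncard hsub (Set.toFinite _)
        _ ≤ (2 * N + 1) ^ T.card := hPcard
        _ ≤ (2 * (N + 1) + 1) ^ T.card := Nat.pow_le_pow_left (by omega) _
    · push_neg at hBconst
      obtain ⟨i₀, hi₀T, hβ⟩ := hBconst
      set β : ℝ := B L i₀ with hβdef
      set A'' : Fin N → ℝ := fun m => A m.castSucc - B m.castSucc i₀ * A L / β with hA''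
      set B'' : Fin N → Fin k → ℝ :=
        fun m i => B m.castSucc i - B m.castSucc i₀ * B L i / β with hB''
      have hsub : ∀ lam : Fin k → ℝ, A L + ∑ i ∈ T, B L i * lam i = 0 → ∀ m : Fin N,
          A m.castSucc + ∑ i ∈ T, B m.castSucc i * lam i
            = A'' m + ∑ i ∈ T.erase i₀, B'' m i * lam i := by
        intro lam hz m
        have hsplit : ∀ C : Fin k → ℝ,
            ∑ i ∈ T, C i * lam i = C i₀ * lam i₀ + ∑ i ∈ T.erase i₀, C i * lam i :=
          fun C => (Finset.add_sum_erase T (fun i => C i * lam i) hi₀T).symm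
        rw [hsplit] at hz
        rw [hsplit]
        have hexp : ∑ i ∈ T.erase i₀, B'' m i * lam i
            = ∑ i ∈ T.erase i₀, B m.castSucc i * lam i
              - B m.castSucc i₀ / β * ∑ i ∈ T.erase i₀, B L i * lam i := by
          rw [Finset.mul_sum, ← Finset.sum_sub_distrib]
          refine Finset.sum_congr rfl fun i _ => ?_
          rw [hB'']
          field_simp
        rw [hexp, hA'']
        have hlami : lam i₀ = -(A L + ∑ i ∈ T.erase i₀, B L i * lam i) / β := by
          rw [eq_div_iff hβ]
          have : β = B L i₀ := hβdef
          nlinarith [hz, this]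
        rw [hlami]
        field_simp
        ring
      have hQsub : Q ⊆ patSet N (T.erase i₀) A'' B'' := by
        rintro p ⟨lam, h1, h2⟩
        refine ⟨lam, fun m => ?_⟩
        have := h1 m
        simp only [hA', hB'] at this
        rw [this, hsub lam h2 m]
      have hQcard : Q.ncard ≤ (2 * N + 1) ^ (T.erase i₀).card :=
        le_trans (Set.ncard_le_ncard hQsub (Set.toFinite _)) (ih _ A'' B'')
      have hcover : patSet (N + 1) T A B ⊆ Sσ 1 ∪ Sσ (-1) ∪ Sσ 0 := by
        intro s hs
        rcases h : s L with _ | _ | _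
        · exact Or.inr ⟨hs, h⟩
        · exact Or.inl (Or.inr ⟨hs, h⟩)
        · exact Or.inl (Or.inl ⟨hs, h⟩)
      have hS1 : (Sσ 1).ncard + (Sσ (-1)).ncard ≤ P.ncard + Q.ncard := by
        rw [hicard 1, hicard (-1)]
        have h0 := Set.ncard_union_add_ncard_inter (Fin.init '' Sσ 1) (Fin.init '' Sσ (-1))
          (Set.toFinite _) (Set.toFinite _)
        have hu : (Fin.init '' Sσ 1 ∪ Fin.init '' Sσ (-1)).ncard ≤ P.ncard :=
          Set.ncard_le_ncard (Set.union_subset (hIP 1) (hIP (-1))) (Set.toFinite _)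
        have hi : (Fin.init '' Sσ 1 ∩ Fin.init '' Sσ (-1)).ncard ≤ Q.ncard :=
          Set.ncard_le_ncard hIinter (Set.toFinite _)
        omega
      have hS0 : (Sσ 0).ncard ≤ Q.ncard := by
        rw [hicard 0]; exact Set.ncard_le_ncard hI0 (Set.toFinite _)
      have htotal : (patSet (N + 1) T A B).ncard ≤ P.ncard + Q.ncard + Q.ncard := by
        have c1 : (patSet (N + 1) T A B).ncard ≤ (Sσ 1 ∪ Sσ (-1) ∪ Sσ 0).ncard :=
          Set.ncard_le_ncard hcover (Set.toFinite _)
        have c2 := Set.ncard_union_le (Sσ 1 ∪ Sσ (-1)) (Sσ 0)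
        have c3 := Set.ncard_union_le (Sσ 1) (Sσ (-1))
        omega
      have hte : T.card = (T.erase i₀).card + 1 := (Finset.card_erase_add_one hi₀T).symm
      have hbase : 2 * (N + 1) + 1 = 2 * N + 3 := by ring
      calc (patSet (N + 1) T A B).ncard ≤ P.ncard + Q.ncard + Q.ncard := htotal
        _ ≤ (2 * N + 1) ^ T.card + (2 * N + 1) ^ (T.erase i₀).card
            + (2 * N + 1) ^ (T.erase i₀).card := by omega
        _ ≤ (2 * (N + 1) + 1) ^ T.card := by
            rw [hte, hbase]
            have h1 : (2 * N + 1) ^ ((T.erase i₀).card + 1) + (2 * N + 1) ^ (T.erase i₀).card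
                + (2 * N + 1) ^ (T.erase i₀).card
                = (2 * N + 1) ^ (T.erase i₀).card * (2 * N + 3) := by rw [pow_succ]; ring
            rw [h1, pow_succ]
            exact Nat.mul_le_mul_right _ (Nat.pow_le_pow_left (by omega) _)

lemma patSet_card_fintype {k : ℕ} {ι : Type*} [Fintype ι] (A : ι → ℝ) (B : ι → Fin k → ℝ) :
    {s : ι → SignType |
      ∃ lam : Fin k → ℝ, ∀ m, s m = SignType.sign (A m + ∑ i, B m i * lam i)}.ncard
    ≤ (2 * Fintype.card ι + 1) ^ k := by
  classical
  set e := (Fintype.equivFin ι).symm with he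
  set S : Set (ι → SignType) := {s : ι → SignType |
      ∃ lam : Fin k → ℝ, ∀ m, s m = SignType.sign (A m + ∑ i, B m i * lam i)} with hS
  have hinj : Function.Injective (fun s : ι → SignType => s ∘ e) := by
    intro s s' hss
    funext m
    have := congrFun hss (e.symm m)
    simpa using this
  have himg : (fun s : ι → SignType => s ∘ e) '' S
      = patSet (Fintype.card ι) Finset.univ (fun m => A (e m)) (fun m => B (e m)) := by
    ext tt
    constructor
    · rintro ⟨s, ⟨lam, hs⟩, rfl⟩
      exact ⟨lam, fun m => hs (e m)⟩
    · rintro ⟨lam, ht⟩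
      refine ⟨tt ∘ e.symm, ⟨lam, fun m => ?_⟩, ?_⟩
      · have := ht (e.symm m)
        simpa using this
      · funext m; simp
  calc S.ncard = ((fun s : ι → SignType => s ∘ e) '' S).ncard :=
        (Set.ncard_image_of_injective S hinj).symm
    _ = (patSet (Fintype.card ι) Finset.univ (fun m => A (e m)) (fun m => B (e m))).ncard := by
        rw [himg]
    _ ≤ (2 * Fintype.card ι + 1) ^ (Finset.univ : Finset (Fin k)).card :=
        patSet_card _ _ _ _
    _ = (2 * Fintype.card ι + 1) ^ k := by rw [Finset.card_univ, Fintype.card_fin]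

section sel

variable {α β : Type*} [DecidableEq α] [LinearOrder β]

/-- The `σ` elements of `Z` with the smallest `κ`-keys. -/
def selTop (Z : Finset α) (κ : α → β) (σ : ℕ) : Finset α :=
  Z.filter (fun i => (Z.filter (fun j => κ j < κ i)).card < σ)

lemma selTop_subset (Z : Finset α) (κ : α → β) (σ : ℕ) : selTop Z κ σ ⊆ Z :=
  Finset.filter_subset _ _

lemma selTop_card (Z : Finset α) (κ : α → β) (σ : ℕ) (hκ : Set.InjOn κ Z) :
    (selTop Z κ σ).card = min σ Z.card := by
  classical
  set ρ : α → ℕ := fun i => (Z.filter (fun j => κ j < κ i)).card with hρ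
  have hmono : ∀ i ∈ Z, ∀ j ∈ Z, κ i < κ j → ρ i < ρ j := by
    intro i hi j hj hij
    apply Finset.card_lt_card
    rw [Finset.ssubset_iff_of_subset]
    · exact ⟨i, by simp [hi, hij], by simp⟩
    · intro x hx
      simp only [Finset.mem_filter] at hx ⊢
      exact ⟨hx.1, hx.2.trans hij⟩
  have hinj : Set.InjOn ρ Z := by
    intro i hi j hj hij
    by_contra hne
    have hkne : κ i ≠ κ j := fun hc => hne (hκ hi hj hc)
    rcases hkne.lt_or_gt with h | h
    · exact absurd hij (Nat.ne_of_lt (hmono i hi j hj h))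
    · exact absurd hij.symm (Nat.ne_of_lt (hmono j hj i hi h))
  have hlt : ∀ i ∈ Z, ρ i < Z.card := by
    intro i hi
    have hsub : Z.filter (fun j => κ j < κ i) ⊆ Z.erase i := by
      intro j hj
      simp only [Finset.mem_filter] at hj
      exact Finset.mem_erase.mpr
        ⟨fun hji => absurd hj.2 (by rw [hji]; exact lt_irrefl _), hj.1⟩
    calc ρ i ≤ (Z.erase i).card := Finset.card_le_card hsub
      _ < Z.card := Finset.card_erase_lt_of_mem hi
  have himg : Z.image ρ = Finset.range Z.card := by
    apply Finset.eq_of_subset_of_card_le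
    · intro x hx
      rcases Finset.mem_image.mp hx with ⟨i, hi, rfl⟩
      exact Finset.mem_range.mpr (hlt i hi)
    · rw [Finset.card_range, Finset.card_image_of_injOn hinj]
  have hsel : selTop Z κ σ = Z.filter (fun i => ρ i < σ) := rfl
  have h1 : (Z.filter (fun i => ρ i < σ)).image ρ = (Z.image ρ).filter (· < σ) := by
    ext x
    simp only [Finset.mem_image, Finset.mem_filter]
    constructor
    · rintro ⟨i, ⟨hi, hilt⟩, rfl⟩
      exact ⟨⟨i, hi, rfl⟩, hilt⟩
    · rintro ⟨⟨i, hi, rfl⟩, hlt⟩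
      exact ⟨i, ⟨hi, hlt⟩, rfl⟩
  have h2 : (selTop Z κ σ).card = ((Z.filter (fun i => ρ i < σ)).image ρ).card := by
    rw [hsel, Finset.card_image_of_injOn (hinj.mono (Finset.filter_subset _ _))]
  rw [h2, h1, himg]
  have h3 : (Finset.range Z.card).filter (· < σ) = Finset.range (min σ Z.card) := by
    ext x
    simp only [Finset.mem_filter, Finset.mem_range, lt_min_iff]
    tauto
  rw [h3, Finset.card_range]

lemma selTop_dominates (Z : Finset α) (κ : α → β) (σ : ℕ) (hκ : Set.InjOn κ Z) :
    ∀ i ∈ Z, i ∉ selTop Z κ σ → ∀ j ∈ selTop Z κ σ, κ j < κ i := by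
  intro i hi hiT j hjT
  have hj := Finset.mem_filter.mp hjT
  have hiρ : ¬ ((Z.filter (fun j => κ j < κ i)).card < σ) := by
    intro hc
    exact hiT (Finset.mem_filter.mpr ⟨hi, hc⟩)
  rcases lt_trichotomy (κ j) (κ i) with h | h | h
  · exact h
  · exact absurd (hκ hj.1 hi h) (fun hc => hiT (hc ▸ hjT))
  · have hlt : (Z.filter (fun j' => κ j' < κ i)).card
        < (Z.filter (fun j' => κ j' < κ j)).card := by
      apply Finset.card_lt_card
      rw [Finset.ssubset_iff_of_subset]
      · exact ⟨i, by simp [hi, h], by simp⟩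
      · intro x hx
        simp only [Finset.mem_filter] at hx ⊢
        exact ⟨hx.1, hx.2.trans h⟩
    exact absurd (lt_trans hlt hj.2) hiρ

end sel

lemma sum_le_sum_of_dominates {α : Type*} [DecidableEq α] (S T : Finset α) (f : α → ℝ)
    (hf : ∀ j ∈ T, 0 ≤ f j) (hcard : S.card ≤ T.card)
    (hd : ∀ i ∈ S, i ∉ T → ∀ j ∈ T, j ∉ S → f i ≤ f j) :
    ∑ i ∈ S, f i ≤ ∑ i ∈ T, f i := by
  have hcards : (S \ T).card ≤ (T \ S).card := by
    have h1 := Finset.card_sdiff_add_card_inter S T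
    have h2 := Finset.card_sdiff_add_card_inter T S
    have h3 : (S ∩ T).card = (T ∩ S).card := by rw [Finset.inter_comm]
    omega
  have key : ∑ i ∈ S \ T, f i ≤ ∑ i ∈ T \ S, f i := by
    rcases Finset.eq_empty_or_nonempty (T \ S) with hTS | hTS
    · have hST : S \ T = ∅ := Finset.card_eq_zero.mp (by rw [hTS] at hcards; simpa using hcards)
      rw [hST, hTS]
    · obtain ⟨j₀, hj₀, hmin⟩ := Finset.exists_min_image (T \ S) f hTS
      have hj₀T := (Finset.mem_sdiff.mp hj₀).1
      have h0 : 0 ≤ f j₀ := hf _ hj₀T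
      calc ∑ i ∈ S \ T, f i ≤ (S \ T).card • f j₀ :=
            Finset.sum_le_card_nsmul _ _ _ (fun i hi =>
              hd i (Finset.mem_sdiff.mp hi).1 (Finset.mem_sdiff.mp hi).2 j₀ hj₀T
                (Finset.mem_sdiff.mp hj₀).2)
        _ ≤ (T \ S).card • f j₀ := by
            simp only [nsmul_eq_mul]
            exact mul_le_mul_of_nonneg_right (by exact_mod_cast hcards) h0
        _ ≤ ∑ i ∈ T \ S, f i := Finset.card_nsmul_le_sum _ _ _ (fun j hj => hmin j hj)
  calc ∑ i ∈ S, f i = ∑ i ∈ S ∩ T, f i + ∑ i ∈ S \ T, f i :=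
        (Finset.sum_inter_add_sum_sdiff S T f).symm
    _ ≤ ∑ i ∈ S ∩ T, f i + ∑ i ∈ T \ S, f i := by linarith
    _ = ∑ i ∈ T ∩ S, f i + ∑ i ∈ T \ S, f i := by rw [Finset.inter_comm]
    _ = ∑ i ∈ T, f i := Finset.sum_inter_add_sum_sdiff T S f

/-- for a diagonal `n×n` matrix `A` and `b, c_1,…,c_k ∈ ℝ^n`, `σ ≤ n`,
there is a constant `C₀` depending only on `k` and a family `𝒳` of at most
`C₀ · n^{2k}` subsets of `{1,…,n}`, each of cardinality `σ`, such that for every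
`λ ∈ ℝ^k` the problem `opt(σ)_{|λ}` has an optimal solution whose support is
contained in some `χ ∈ 𝒳`. -/
theorem stmt15 (k : ℕ) :
    ∃ C₀ : ℝ, ∀ (n : ℕ), 0 < n → ∀ (σ : ℕ), σ ≤ n →
      ∀ (a b : Fin n → ℝ) (c : Fin k → Fin n → ℝ),
      ∃ 𝒳 : Finset (Finset (Fin n)),
        (𝒳.card : ℝ) ≤ C₀ * (n : ℝ) ^ (2 * k) ∧
        (∀ χ ∈ 𝒳, χ.card = σ) ∧
        ∀ lam : Fin k → ℝ, ∃ x : Fin n → ℝ,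
          Set.ncard {i | x i ≠ 0} ≤ σ ∧
          (∀ y : Fin n → ℝ, Set.ncard {i | y i ≠ 0} ≤ σ →
            objDiag a b c x lam ≤ objDiag a b c y lam) ∧
          ∃ χ ∈ 𝒳, {i | x i ≠ 0} ⊆ ↑χ := by
  classical
  refine ⟨(5 : ℝ) ^ k, ?_⟩
  intro n hn σ hσ a b c
  -- basic data
  let d : (Fin k → ℝ) → Fin n → ℝ := fun lam i => b i - ∑ ℓ, c ℓ i * lam ℓ
  have hd : ∀ lam i, b i - ∑ ℓ, c ℓ i * lam ℓ = d lam i := fun _ _ => rfl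
  let Z : Finset (Fin n) := Finset.univ.filter (fun i => a i ≠ 0)
  let κ : (Fin k → ℝ) → Fin n → ℝ ×ₗ Fin n := fun lam i => toLex (-(d lam i) ^ 2, i)
  have hκinj : ∀ lam, Set.InjOn (κ lam) ↑Z := by
    intro lam i _ j _ hij
    have := congrArg (fun p => (ofLex p).2) hij
    simpa [κ] using this
  let Tt : (Fin k → ℝ) → Finset (Fin n) := fun lam => selTop Z (κ lam) σ
  -- affine pattern data
  let A₀ : (Fin n × Fin n) ⊕ (Fin n × Fin n) → ℝ :=
    Sum.elim (fun p => b p.1 - b p.2) (fun p => b p.1 + b p.2)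
  let B₀ : (Fin n × Fin n) ⊕ (Fin n × Fin n) → Fin k → ℝ :=
    Sum.elim (fun p ℓ => c ℓ p.2 - c ℓ p.1) (fun p ℓ => -(c ℓ p.1) - c ℓ p.2)
  have hval1 : ∀ (lam : Fin k → ℝ) (i j : Fin n),
      A₀ (Sum.inl (i, j)) + ∑ ℓ, B₀ (Sum.inl (i, j)) ℓ * lam ℓ = d lam i - d lam j := by
    intro lam i j
    have hsum1 : ∑ ℓ, (c ℓ j - c ℓ i) * lam ℓ
        = (∑ ℓ, c ℓ j * lam ℓ) - ∑ ℓ, c ℓ i * lam ℓ := by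
      rw [← Finset.sum_sub_distrib]
      exact Finset.sum_congr rfl fun _ _ => by ring
    show (b i - b j) + ∑ ℓ, (c ℓ j - c ℓ i) * lam ℓ
      = (b i - ∑ ℓ, c ℓ i * lam ℓ) - (b j - ∑ ℓ, c ℓ j * lam ℓ)
    rw [hsum1]; ring
  have hval2 : ∀ (lam : Fin k → ℝ) (i j : Fin n),
      A₀ (Sum.inr (i, j)) + ∑ ℓ, B₀ (Sum.inr (i, j)) ℓ * lam ℓ = d lam i + d lam j := by
    intro lam i j
    have hsum1 : ∑ ℓ, (-(c ℓ i) - c ℓ j) * lam ℓ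
        = (∑ ℓ, -(c ℓ i * lam ℓ)) - ∑ ℓ, c ℓ j * lam ℓ := by
      rw [← Finset.sum_sub_distrib]
      exact Finset.sum_congr rfl fun _ _ => by ring
    show (b i + b j) + ∑ ℓ, (-(c ℓ i) - c ℓ j) * lam ℓ
      = (b i - ∑ ℓ, c ℓ i * lam ℓ) + (b j - ∑ ℓ, c ℓ j * lam ℓ)
    rw [hsum1, Finset.sum_neg_distrib]; ring
  let pat : (Fin k → ℝ) → ((Fin n × Fin n) ⊕ (Fin n × Fin n)) → SignType :=
    fun lam m => SignType.sign (A₀ m + ∑ ℓ, B₀ m ℓ * lam ℓ)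
  -- pattern invariance
  have hinv : ∀ lam lam', pat lam = pat lam' → Tt lam = Tt lam' := by
    intro lam lam' hp
    have hsq : ∀ i j : Fin n, SignType.sign ((d lam i) ^ 2 - (d lam j) ^ 2)
        = SignType.sign ((d lam' i) ^ 2 - (d lam' j) ^ 2) := by
      intro i j
      have hfac : ∀ μ : Fin k → ℝ,
          (d μ i) ^ 2 - (d μ j) ^ 2 = (d μ i - d μ j) * (d μ i + d μ j) := fun μ => by ring
      rw [hfac, hfac, sign_mul, sign_mul]
      have h1 : SignType.sign (d lam i - d lam j) = SignType.sign (d lam' i - d lam' j) := by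
        have h := congrFun hp (Sum.inl (i, j))
        simp only [pat] at h
        rwa [hval1 lam i j, hval1 lam' i j] at h
      have h2 : SignType.sign (d lam i + d lam j) = SignType.sign (d lam' i + d lam' j) := by
        have h := congrFun hp (Sum.inr (i, j))
        simp only [pat] at h
        rwa [hval2 lam i j, hval2 lam' i j] at h
      rw [h1, h2]
    have hlt : ∀ i j : Fin n,
        ((d lam j) ^ 2 < (d lam i) ^ 2 ↔ (d lam' j) ^ 2 < (d lam' i) ^ 2) := by
      intro i j
      have h := (sign_determines _ _ (hsq i j)).1
      rw [sub_pos, sub_pos] at h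
      exact h
    have heq : ∀ i j : Fin n,
        ((d lam i) ^ 2 = (d lam j) ^ 2 ↔ (d lam' i) ^ 2 = (d lam' j) ^ 2) := by
      intro i j
      have h := (sign_determines _ _ (hsq i j)).2
      rw [sub_eq_zero, sub_eq_zero] at h
      exact h
    have hκiff : ∀ i j : Fin n, (κ lam i < κ lam j ↔ κ lam' i < κ lam' j) := by
      intro i j
      show toLex (-(d lam i) ^ 2, i) < toLex (-(d lam j) ^ 2, j) ↔
        toLex (-(d lam' i) ^ 2, i) < toLex (-(d lam' j) ^ 2, j)
      rw [Prod.Lex.lt_iff, Prod.Lex.lt_iff]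
      simp only [ofLex_toLex]
      simp only [neg_lt_neg_iff, neg_inj]
      rw [hlt i j, heq i j]
    show selTop Z (κ lam) σ = selTop Z (κ lam') σ
    unfold selTop
    apply Finset.filter_congr
    intro i _
    have : Z.filter (fun j => κ lam j < κ lam i) = Z.filter (fun j => κ lam' j < κ lam' i) :=
      Finset.filter_congr (fun j _ => by rw [hκiff j i])
    rw [this]
  have hTsub : ∀ lam, Tt lam ⊆ Z := fun lam => selTop_subset _ _ _
  have hTcard : ∀ lam, (Tt lam).card = min σ Z.card :=
    fun lam => selTop_card Z (κ lam) σ (hκinj lam)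
  have hTle : ∀ lam, (Tt lam).card ≤ σ := fun lam => by
    rw [hTcard]; exact min_le_left _ _
  -- canonical padded support for each pattern
  have hΦ : ∀ s : ((Fin n × Fin n) ⊕ (Fin n × Fin n)) → SignType,
      ∃ χ : Finset (Fin n), χ.card = σ ∧ ∀ lam, pat lam = s → Tt lam ⊆ χ := by
    intro s
    by_cases hs : ∃ lam, pat lam = s
    · obtain ⟨lam₀, hlam₀⟩ := hs
      obtain ⟨χ, hsub, hcard⟩ :=
        Finset.exists_superset_card_eq (hTle lam₀) (by simpa using hσ)
      exact ⟨χ, hcard, fun lam hlam => by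
        rw [show Tt lam = Tt lam₀ from hinv lam lam₀ (by rw [hlam, hlam₀])]
        exact hsub⟩
    · obtain ⟨χ, _, hcard⟩ := Finset.exists_superset_card_eq
        (show (∅ : Finset (Fin n)).card ≤ σ by simp) (by simpa using hσ)
      exact ⟨χ, hcard, fun lam hlam => absurd ⟨lam, hlam⟩ hs⟩
  choose F hFcard hFsub using hΦ
  let R : Finset (((Fin n × Fin n) ⊕ (Fin n × Fin n)) → SignType) :=
    Finset.univ.filter (fun s => ∃ lam, pat lam = s)
  refine ⟨R.image F, ?_, ?_, ?_⟩
  · -- cardinality bound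
    have h1 : (R.image F).card ≤ R.card := Finset.card_image_le
    have h2 : R.card ≤ (2 * Fintype.card ((Fin n × Fin n) ⊕ (Fin n × Fin n)) + 1) ^ k := by
      have hcoe : (↑R : Set (((Fin n × Fin n) ⊕ (Fin n × Fin n)) → SignType))
          = {s | ∃ lam : Fin k → ℝ, ∀ m, s m = SignType.sign (A₀ m + ∑ i, B₀ m i * lam i)} := by
        ext s
        simp only [R, Finset.coe_filter, Finset.mem_univ, true_and, Set.mem_setOf_eq]
        constructor
        · rintro ⟨lam, rfl⟩
          exact ⟨lam, fun m => rfl⟩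
        · rintro ⟨lam, h⟩
          exact ⟨lam, funext fun m => (h m).symm⟩
      calc R.card = (↑R : Set (((Fin n × Fin n) ⊕ (Fin n × Fin n)) → SignType)).ncard :=
            (Set.ncard_coe_finset R).symm
        _ ≤ _ := by rw [hcoe]; exact patSet_card_fintype A₀ B₀
    have h4 : (2 * Fintype.card ((Fin n × Fin n) ⊕ (Fin n × Fin n)) + 1) ^ k
        ≤ 5 ^ k * n ^ (2 * k) := by
      have hcard : Fintype.card ((Fin n × Fin n) ⊕ (Fin n × Fin n)) = n * n + n * n := by simp
      rw [hcard]
      have hbase : 2 * (n * n + n * n) + 1 ≤ 5 * n ^ 2 := by nlinarith [hn]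
      calc (2 * (n * n + n * n) + 1) ^ k ≤ (5 * n ^ 2) ^ k := Nat.pow_le_pow_left hbase k
        _ = 5 ^ k * n ^ (2 * k) := by rw [Nat.mul_pow, ← pow_mul]
    calc ((R.image F).card : ℝ) ≤ ((5 ^ k * n ^ (2 * k) : ℕ) : ℝ) := by
          exact_mod_cast le_trans h1 (le_trans h2 h4)
      _ = (5 : ℝ) ^ k * (n : ℝ) ^ (2 * k) := by push_cast; ring
  · intro χ hχ
    obtain ⟨s, _, rfl⟩ := Finset.mem_image.mp hχ
    exact hFcard s
  · intro lam
    set T : Finset (Fin n) := Tt lam with hT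
    let x : Fin n → ℝ := fun i => if i ∈ T then d lam i / a i else 0
    have hsupp : {i | x i ≠ 0} ⊆ ↑T := by
      intro i hi
      by_contra hiT
      have hiT' : i ∉ T := fun hc => hiT (Finset.mem_coe.mpr hc)
      exact hi (by simp only [x]; rw [if_neg hiT'])
    refine ⟨x, ?_, ?_, ?_⟩
    · calc Set.ncard {i | x i ≠ 0} ≤ (↑T : Set (Fin n)).ncard :=
            Set.ncard_le_ncard hsupp (Set.toFinite _)
        _ = T.card := Set.ncard_coe_finset T
        _ ≤ σ := hTle lam
    · intro y hy
      have haT : ∀ i ∈ T, a i ≠ 0 := by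
        intro i hi
        have := hTsub lam hi
        simpa [Z] using (Finset.mem_filter.mp this).2
      have hobjx : objDiag a b c x lam = ∑ i ∈ Tᶜ, (d lam i) ^ 2 := by
        unfold objDiag
        simp only [hd]
        rw [← Finset.sum_add_sum_compl T (fun i => (a i * x i - d lam i) ^ 2)]
        have hz1 : ∑ i ∈ T, (a i * x i - d lam i) ^ 2 = 0 :=
          Finset.sum_eq_zero fun i hi => by
            have : x i = d lam i / a i := by simp [x, hi]
            rw [this, mul_div_cancel₀ _ (haT i hi)]
            simp
        have hz2 : ∑ i ∈ Tᶜ, (a i * x i - d lam i) ^ 2 = ∑ i ∈ Tᶜ, (d lam i) ^ 2 :=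
          Finset.sum_congr rfl fun i hi => by
            have hiT : i ∉ T := Finset.mem_compl.mp hi
            have : x i = 0 := by simp [x, hiT]
            rw [this]
            ring
        rw [hz1, hz2, zero_add]
      set Ty : Finset (Fin n) := Finset.univ.filter (fun i => y i ≠ 0 ∧ a i ≠ 0) with hTy
      have hobjy : ∑ i ∈ Tyᶜ, (d lam i) ^ 2 ≤ objDiag a b c y lam := by
        unfold objDiag
        simp only [hd]
        rw [← Finset.sum_add_sum_compl Ty (fun i => (a i * y i - d lam i) ^ 2)]
        have hz2 : ∑ i ∈ Tyᶜ, (a i * y i - d lam i) ^ 2 = ∑ i ∈ Tyᶜ, (d lam i) ^ 2 :=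
          Finset.sum_congr rfl fun i hi => by
            have hiTy : i ∉ Ty := Finset.mem_compl.mp hi
            have : a i * y i = 0 := by
              by_cases hyi : y i = 0
              · rw [hyi, mul_zero]
              · have hai : a i = 0 := by
                  by_contra hai
                  exact hiTy (by simp [Ty, hyi, hai])
                rw [hai, zero_mul]
            rw [this]
            ring
        rw [hz2]
        have : 0 ≤ ∑ i ∈ Ty, (a i * y i - d lam i) ^ 2 :=
          Finset.sum_nonneg fun i _ => sq_nonneg _
        linarith
      have hTyZ : Ty ⊆ Z := fun i hi => by
        have := Finset.mem_filter.mp hi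
        exact Finset.mem_filter.mpr ⟨Finset.mem_univ _, this.2.2⟩
      have hTycard : Ty.card ≤ σ := by
        have hsub2 : Ty ⊆ Finset.univ.filter (fun i => y i ≠ 0) := fun i hi => by
          have := Finset.mem_filter.mp hi
          exact Finset.mem_filter.mpr ⟨Finset.mem_univ _, this.2.1⟩
        have hset : {i | y i ≠ 0} = ↑(Finset.univ.filter (fun i => y i ≠ 0)) := by
          ext i; simp
        calc Ty.card ≤ (Finset.univ.filter (fun i => y i ≠ 0)).card :=
              Finset.card_le_card hsub2
          _ = Set.ncard {i | y i ≠ 0} := by rw [hset, Set.ncard_coe_finset]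
          _ ≤ σ := hy
      have hTyle : Ty.card ≤ T.card := by
        rw [hT, hTcard]
        exact le_min hTycard (Finset.card_le_card hTyZ)
      have hsum : ∑ i ∈ Ty, (d lam i) ^ 2 ≤ ∑ i ∈ T, (d lam i) ^ 2 := by
        apply sum_le_sum_of_dominates Ty T _ (fun j _ => sq_nonneg _) hTyle
        intro i hi hiT j hj _
        have hiZ : i ∈ Z := hTyZ hi
        have hκlt : κ lam j < κ lam i := selTop_dominates Z (κ lam) σ (hκinj lam) i hiZ hiT j hj
        have := Prod.Lex.lt_iff.mp hκlt
        rcases this with h | h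
        · have : -(d lam j) ^ 2 < -(d lam i) ^ 2 := h
          linarith
        · have : -(d lam j) ^ 2 = -(d lam i) ^ 2 := h.1
          linarith
      have hcompl : ∑ i ∈ Tᶜ, (d lam i) ^ 2 ≤ ∑ i ∈ Tyᶜ, (d lam i) ^ 2 := by
        have h1 := Finset.sum_add_sum_compl T (fun i => (d lam i) ^ 2)
        have h2 := Finset.sum_add_sum_compl Ty (fun i => (d lam i) ^ 2)
        linarith
      linarith [hobjx, hobjy, hcompl]
    · refine ⟨F (pat lam), Finset.mem_image_of_mem F
        (Finset.mem_filter.mpr ⟨Finset.mem_univ _, ⟨lam, rfl⟩⟩), ?_⟩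
      exact hsupp.trans (Finset.coe_subset.mpr (hFsub (pat lam) lam rfl))
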